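/- arXiv:1303.1551 — 3 statements merged into one kernel-verified Lean document; each statement's English description precedes it below -/
import Mathlib

section
/- Let T be a finite tree with |V(T)| ≥ 2 and radius r(T). If u and v are distinct centers of T, then every path in T of length r(T) starting at u contains v, and every path in T of length r(T) starting at v contains u. -/
open SimpleGraph

/-- `eccent G v` is `d_T(v)`: the maximum over `u ∈ V \ {v}` of `dist(v, u)`. -/
noncomputable def eccent {V : Type*} [Fintype V] [DecidableEq V]
    (G : SimpleGraph V) (v : V) : ℕ :=
  (Finset.univ.erase v).sup (fun u => G.dist v u)

/-- `v` is a center of `G` if it minimizes the eccentricity `d_T`. -/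
def IsCenter {V : Type*} [Fintype V] [DecidableEq V] (G : SimpleGraph V) (v : V) : Prop :=
  ∀ u : V, _root_.eccent G v ≤ _root_.eccent G u

/-- In a tree, every path is a geodesic. -/
lemma tree_path_length {V : Type*} {G : SimpleGraph V} (hT : G.IsTree) {a b : V}
    {p : G.Walk a b} (hp : p.IsPath) : p.length = G.dist a b := by
  obtain ⟨q, hq, hql⟩ := (hT.isConnected.preconnected a b).exists_path_of_dist
  have h2 : (⟨p, hp⟩ : G.Path a b) = ⟨q, hq⟩ := hT.IsAcyclic.path_unique _ _
  have h3 : p = q := congrArg Subtype.val h2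
  rw [h3, hql]

/-- Splitting a tree path at an interior vertex splits the distance. -/
lemma tree_dist_split {V : Type*} [DecidableEq V] {G : SimpleGraph V} (hT : G.IsTree) {a b m : V}
    {p : G.Walk a b} (hp : p.IsPath) (hm : m ∈ p.support) :
    G.dist a m + G.dist m b = G.dist a b := by
  have h1 := tree_path_length hT (hp.takeUntil hm)
  have h2 := tree_path_length hT (hp.dropUntil hm)
  have h3 : p.length = G.dist a b := tree_path_length hT hp
  have h4 := congrArg SimpleGraph.Walk.length (p.take_spec hm)
  rw [SimpleGraph.Walk.length_append] at h4
  omega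

/-- If `m` lies on the unique `a`–`b` path in a tree, then for any `w`, `m` lies on the
`a`–`w` path or on the `b`–`w` path. -/
lemma tree_mem_or {V : Type*} [DecidableEq V] {G : SimpleGraph V} (hT : G.IsTree) {a b w m : V}
    {P : G.Walk a b} (hP : P.IsPath) (hm : m ∈ P.support)
    {q : G.Walk a w} (hq : q.IsPath) {s : G.Walk b w} (hs : s.IsPath) :
    m ∈ q.support ∨ m ∈ s.support := by
  set W : G.Walk a b := q.append s.reverse with hW
  have h2 : (⟨P, hP⟩ : G.Path a b) = ⟨W.bypass, W.bypass_isPath⟩ :=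
    hT.IsAcyclic.path_unique _ _
  have h3 : P = W.bypass := congrArg Subtype.val h2
  have h4 : m ∈ W.support := W.support_bypass_subset (h3 ▸ hm)
  rcases (SimpleGraph.Walk.mem_support_append_iff _ _).1 h4 with h | h
  · exact Or.inl h
  · right
    rwa [SimpleGraph.Walk.support_reverse, List.mem_reverse] at h

lemma key_half {V : Type*} [Fintype V] [DecidableEq V] {G : SimpleGraph V}
    (hT : G.IsTree) {u v : V} (hadj : G.Adj u v) (hecc : _root_.eccent G v ≤ _root_.eccent G u) :
    ∀ (w : V) (p : G.Walk u w), p.IsPath → p.length = _root_.eccent G u → v ∈ p.support := by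
  intro w p hp hl
  by_contra hvp
  have hWp : (SimpleGraph.Walk.cons hadj.symm p).IsPath := hp.cons hvp
  have hdvw : G.dist v w = p.length + 1 := by
    have := tree_path_length hT hWp
    simpa [Nat.add_comm] using this.symm
  have hwv : w ≠ v := fun h => hvp (h ▸ p.end_mem_support)
  have hle : G.dist v w ≤ _root_.eccent G v :=
    Finset.le_sup (f := fun x => G.dist v x) (Finset.mem_erase.2 ⟨hwv, Finset.mem_univ w⟩)
  omega

/-- If `u` and `v` are distinct centers of a finite tree with at least two vertices, then
every path of length `r(T)` (the radius, i.e. the eccentricity of a center) starting at `u`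
contains `v`, and vice versa. -/
theorem stmt_4 {V : Type*} [Fintype V] [DecidableEq V] (G : SimpleGraph V)
    (hT : G.IsTree) (h2 : 2 ≤ Fintype.card V)
    (u v : V) (huv : u ≠ v) (hu : IsCenter G u) (hv : IsCenter G v) :
    (∀ (w : V) (p : G.Walk u w), p.IsPath → p.length = _root_.eccent G u → v ∈ p.support) ∧
    (∀ (w : V) (p : G.Walk v w), p.IsPath → p.length = _root_.eccent G v → u ∈ p.support) := by
  have hconn := hT.isConnected
  have hre : _root_.eccent G u = _root_.eccent G v := le_antisymm (hu v) (hv u)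
  set r := _root_.eccent G u with hrdef
  have hrd : G.dist u v ≤ r :=
    Finset.le_sup (f := fun x => G.dist u x) (Finset.mem_erase.2 ⟨huv.symm, Finset.mem_univ v⟩)
  have hd1 : 1 ≤ G.dist u v := hconn.pos_dist_of_ne huv
  -- u and v are adjacent
  have hadj : G.Adj u v := by
    rw [← SimpleGraph.dist_eq_one_iff_adj]
    by_contra hne1
    have hd2 : 2 ≤ G.dist u v := by omega
    obtain ⟨P, hP, hPl⟩ := (hconn.preconnected u v).exists_path_of_dist
    cases P with
    | nil => exact huv rfl
    | @cons _ m _ ha P' =>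
      have hPpath : P'.IsPath := hP.of_cons
      have hmu : m ≠ u := fun h => ((SimpleGraph.Walk.cons_isPath_iff _ _).1 hP).2
        (h ▸ P'.start_mem_support)
      have hdum : G.dist u m = 1 := SimpleGraph.dist_eq_one_iff_adj.2 ha
      have hdmv : G.dist m v = G.dist u v - 1 := by
        have := tree_path_length hT hPpath
        simp only [SimpleGraph.Walk.length_cons] at hPl
        omega
      have hmv : m ≠ v := by
        intro h
        rw [h, SimpleGraph.dist_self] at hdmv
        omega
      have hmem : m ∈ (SimpleGraph.Walk.cons ha P').support := by
        simp [P'.start_mem_support]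
      -- eccentricity of m is ≤ r - 1
      have hecc : _root_.eccent G m ≤ r - 1 := by
        apply Finset.sup_le
        intro w hw
        obtain ⟨q0⟩ := hconn.preconnected u w
        obtain ⟨s0⟩ := hconn.preconnected v w
        rcases tree_mem_or hT hP hmem q0.bypass_isPath s0.bypass_isPath with h | h
        · have hsplit := tree_dist_split hT q0.bypass_isPath h
          have huw : G.dist u w ≤ r := by
            have hwu : w ≠ u := by
              intro hh
              rw [hh, SimpleGraph.dist_self] at hsplit
              omega
            exact Finset.le_sup (f := fun x => G.dist u x)
              (Finset.mem_erase.2 ⟨hwu, Finset.mem_univ w⟩)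
          have := tree_dist_split hT hP hmem
          omega
        · have hsplit := tree_dist_split hT s0.bypass_isPath h
          have hdvm : G.dist v m = G.dist u v - 1 := by rw [SimpleGraph.dist_comm]; exact hdmv
          have hvw : G.dist v w ≤ r := by
            have hwv : w ≠ v := by
              intro hh
              rw [hh, SimpleGraph.dist_self] at hsplit
              omega
            rw [hre]
            exact Finset.le_sup (f := fun x => G.dist v x)
              (Finset.mem_erase.2 ⟨hwv, Finset.mem_univ w⟩)
          omega
      have := hu m
      omega
  exact ⟨key_half hT hadj (hv u), key_half hT hadj.symm (hu v)⟩
end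

section
/- Let T be a finite tree with |V(T)| ≥ 2 and let l be a leaf of T with l distinct from the unique center. If u is the unique center of T, then u is also a center of the tree T \ l obtained by deleting l. -/
open SimpleGraph

section Aux
variable {V : Type*} {G : SimpleGraph V}

/-- A nontrivial walk has a second vertex adjacent to its start, lying in the tail. -/
lemma second_vertex {a b : V} (w : G.Walk a b) (hab : a ≠ b) :
    ∃ c, G.Adj a c ∧ c ∈ w.support.tail := by
  cases w with
  | nil => exact absurd rfl hab
  | cons h w' =>
    exact ⟨_, h, by simp [Walk.support_cons, Walk.start_mem_support]⟩

lemma leaf_not_mem_support [DecidableEq V] {l x y : V} (hl : (G.neighborSet l).ncard = 1)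
    {p : G.Walk x y} (hp : p.IsPath) (hx : x ≠ l) (hy : y ≠ l) : l ∉ p.support := by
  intro hmem
  obtain ⟨n, hn⟩ := Set.ncard_eq_one.mp hl
  have hspec := p.take_spec hmem
  have hnodup : (p.support).Nodup := hp.support_nodup
  rw [← hspec, Walk.support_append] at hnodup
  have hdisj := (List.nodup_append.mp hnodup).2.2
  -- second vertex of reversed takeUntil
  obtain ⟨a, ha, hamem⟩ := second_vertex (p.takeUntil l hmem).reverse (Ne.symm hx)
  obtain ⟨b, hb, hbmem⟩ := second_vertex (p.dropUntil l hmem) hy.symm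
  have haq : a ∈ (p.takeUntil l hmem).support := by
    have := List.mem_of_mem_tail hamem
    rwa [Walk.support_reverse, List.mem_reverse] at this
  have han : a = n := by have : a ∈ G.neighborSet l := ha; rw [hn] at this; exact this
  have hbn : b = n := by have : b ∈ G.neighborSet l := hb; rw [hn] at this; exact this
  rw [han, ← hbn] at haq
  exact hdisj b haq b hbmem rfl

lemma walk_to_induce {l : V} : ∀ {x y : V} (w : G.Walk x y) (hx : x ≠ l) (hy : y ≠ l),
    l ∉ w.support →
    ∃ w' : (G.induce {v : V | v ≠ l}).Walk ⟨x, hx⟩ ⟨y, hy⟩, w'.length = w.length := by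
  intro x y w
  induction w with
  | nil => exact fun hx hy _ => ⟨Walk.nil, rfl⟩
  | @cons x m y h w' ih =>
    intro hx hy hmem
    rw [Walk.support_cons] at hmem
    have hmem' : l ∉ w'.support := fun hc => hmem (List.mem_cons_of_mem _ hc)
    have hm : m ≠ l := fun hc => hmem' (hc ▸ Walk.start_mem_support w')
    obtain ⟨w'', hw''⟩ := ih hm hy hmem'
    exact ⟨Walk.cons (by exact h : (G.induce {v : V | v ≠ l}).Adj ⟨x, hx⟩ ⟨m, hm⟩) w'',
      congrArg (· + 1) hw''⟩

lemma dist_induce [DecidableEq V] {l : V} (hG : G.Connected) (hl : (G.neighborSet l).ncard = 1)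
    {x y : V} (hx : x ≠ l) (hy : y ≠ l) :
    (G.induce {v : V | v ≠ l}).dist ⟨x, hx⟩ ⟨y, hy⟩ = G.dist x y := by
  obtain ⟨p, hp, hlen⟩ := (hG.preconnected x y).exists_path_of_dist
  have hnot := leaf_not_mem_support hl hp hx hy
  obtain ⟨w', hw'⟩ := walk_to_induce p hx hy hnot
  apply le_antisymm
  · calc (G.induce {v : V | v ≠ l}).dist ⟨x, hx⟩ ⟨y, hy⟩ ≤ w'.length := dist_le w'
      _ = G.dist x y := by rw [hw', hlen]
  · obtain ⟨q, hq⟩ := Reachable.exists_walk_length_eq_dist ⟨w'⟩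
    have h1 : G.dist x y ≤ (q.map ⟨Subtype.val, fun h => h⟩ : G.Walk x y).length := dist_le _
    rwa [Walk.length_map, hq] at h1

end Aux

/-- A leaf of a graph is a vertex of degree one. -/
def IsLeaf {V : Type*} (G : SimpleGraph V) (l : V) : Prop :=
  (G.neighborSet l).ncard = 1

section Main
variable {V : Type*} [Fintype V] [DecidableEq V] {G : SimpleGraph V}

lemma eccent_induce_le {l v : V} (hG : G.Connected) (hl : (G.neighborSet l).ncard = 1)
    (hv : v ≠ l) :
    _root_.eccent (G.induce {x : V | x ≠ l}) ⟨v, hv⟩ ≤ _root_.eccent G v := by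
  apply Finset.sup_le
  rintro ⟨w, hw⟩ hmem
  have hwv : w ≠ v := by
    intro hc; subst hc
    exact (Finset.ne_of_mem_erase hmem) rfl
  rw [dist_induce hG hl hv hw]
  exact Finset.le_sup (f := fun u => G.dist v u)
    (Finset.mem_erase.mpr ⟨hwv, Finset.mem_univ w⟩)

lemma eccent_le_induce_add_one {l v : V} (hG : G.Connected)
    (hl : (G.neighborSet l).ncard = 1) (hv : v ≠ l) :
    _root_.eccent G v ≤ _root_.eccent (G.induce {x : V | x ≠ l}) ⟨v, hv⟩ + 1 := by
  obtain ⟨n, hn⟩ := Set.ncard_eq_one.mp hl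
  have hln : G.Adj l n := by
    have : n ∈ G.neighborSet l := by rw [hn]; rfl
    exact this
  have hnl : n ≠ l := fun hc => (G.irrefl (hc ▸ hln))
  apply Finset.sup_le
  intro w hmem
  have hwv : w ≠ v := Finset.ne_of_mem_erase hmem
  by_cases hwl : w = l
  · rw [hwl]
    have htri : G.dist v l ≤ G.dist v n + G.dist n l := hG.dist_triangle
    have hd1 : G.dist n l = 1 := dist_eq_one_iff_adj.mpr hln.symm
    by_cases hnv : n = v
    · subst hnv
      simp only [SimpleGraph.dist_self, zero_add, hd1] at htri
      omega
    · have : G.dist v n ≤ _root_.eccent (G.induce {x : V | x ≠ l}) ⟨v, hv⟩ := by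
        rw [← dist_induce hG hl hv hnl]
        exact Finset.le_sup (f := fun u => (G.induce {x : V | x ≠ l}).dist ⟨v, hv⟩ u)
          (Finset.mem_erase.mpr ⟨fun hc => hnv (congrArg Subtype.val hc), Finset.mem_univ _⟩)
      omega
  · have : G.dist v w ≤ _root_.eccent (G.induce {x : V | x ≠ l}) ⟨v, hv⟩ := by
      rw [← dist_induce hG hl hv hwl]
      exact Finset.le_sup (f := fun u => (G.induce {x : V | x ≠ l}).dist ⟨v, hv⟩ u)
        (Finset.mem_erase.mpr ⟨fun hc => hwv (congrArg Subtype.val hc), Finset.mem_univ _⟩)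
    omega

end Main

/-- If `u` is the unique center of a finite tree `T` with at least two vertices and `l ≠ u`
is a leaf of `T`, then `u` is also a center of the tree `T \ l` obtained by deleting `l`. -/
theorem stmt_7 {V : Type*} [Fintype V] [DecidableEq V] (G : SimpleGraph V)
    (hT : G.IsTree) (h2 : 2 ≤ Fintype.card V)
    (l u : V) (hl : IsLeaf G l) (hlu : l ≠ u)
    (hu : IsCenter G u) (huniq : ∀ w : V, IsCenter G w → w = u) :
    IsCenter (G.induce {x : V | x ≠ l}) ⟨u, hlu.symm⟩ := by
  have hG := hT.isConnected
  have hl' : (G.neighborSet l).ncard = 1 := hl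
  rintro ⟨v, hv⟩
  by_cases hvu : v = u
  · subst hvu; exact le_refl _
  · have hnc : ¬ IsCenter G v := fun hc => hvu (huniq v hc)
    have h1 : _root_.eccent G u < _root_.eccent G v := by
      rw [IsCenter] at hnc; push_neg at hnc
      obtain ⟨x, hx⟩ := hnc
      exact lt_of_le_of_lt (hu x) hx
    have h2' := eccent_induce_le (l := l) hG hl' hlu.symm
    have h3 := eccent_le_induce_add_one (l := l) hG hl' hv
    omega
end

section
/- Let T be a finite tree with |V(T)| ≥ 2 and let u be a vertex of T. Then there exists a special leaf with respect to T and u. -/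
open SimpleGraph

/-- `compOf G v x` is the vertex set of the component of `G \ v` (the graph obtained by
deleting the vertex `v`) containing `x` (for `x ≠ v`): the vertices reachable from `x`
by a walk avoiding `v`. -/
def compOf {V : Type*} (G : SimpleGraph V) (v x : V) : Set V :=
  {y : V | ∃ p : G.Walk x y, v ∉ p.support}

/-- `l` is a special leaf with respect to `G` and `u`: `l ≠ u` is a leaf, and for every
vertex `w ≠ l` on the path from `u` to `l`, every component of `G \ w` not containing `u`
has at least as many vertices as the component of `G \ w` containing `l`. -/
def IsSpecialLeaf {V : Type*} (G : SimpleGraph V) (u l : V) : Prop :=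
  l ≠ u ∧ IsLeaf G l ∧
    ∀ p : G.Walk u l, p.IsPath →
      ∀ w ∈ p.support, w ≠ l →
        ∀ x : V, x ≠ w → u ∉ compOf G w x →
          (compOf G w l).ncard ≤ (compOf G w x).ncard

section Aux

variable {V : Type*} {G : SimpleGraph V}

lemma mem_compOf_self {v x : V} (h : x ≠ v) : x ∈ compOf G v x :=
  ⟨Walk.nil, by simp [Ne.symm h]⟩

lemma not_mem_compOf_self {v x : V} : v ∉ compOf G v x :=
  fun ⟨p, hp⟩ => hp p.end_mem_support

lemma mem_compOf_of_support {v x y w : V} (p : G.Walk x y) (hv : v ∉ p.support)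
    (hw : w ∈ p.support) : w ∈ compOf G v x := by
  classical
  exact ⟨p.takeUntil w hw, fun h => hv (p.support_takeUntil_subset hw h)⟩

lemma compOf_symm {v x y : V} (h : y ∈ compOf G v x) : x ∈ compOf G v y := by
  obtain ⟨p, hp⟩ := h
  exact ⟨p.reverse, by simpa using hp⟩

lemma compOf_trans {v x y z : V} (hxy : y ∈ compOf G v x) (hyz : z ∈ compOf G v y) :
    z ∈ compOf G v x := by
  obtain ⟨p, hp⟩ := hxy
  obtain ⟨q, hq⟩ := hyz
  refine ⟨p.append q, ?_⟩
  rw [Walk.support_append]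
  intro h
  rcases List.mem_append.1 h with h | h
  · exact hp h
  · exact hq (List.mem_of_mem_tail h)

lemma compOf_eq_of_mem {v x y : V} (h : y ∈ compOf G v x) : compOf G v x = compOf G v y :=
  Set.ext fun _ => ⟨fun hz => compOf_trans (compOf_symm h) hz, fun hz => compOf_trans h hz⟩

/-- In an acyclic graph: if `u–v` is an edge and `z ≠ u` is a neighbor of `v`, then `u` is not
in the component of `G \ v` containing `z`. -/
lemma not_mem_compOf_adj (hac : G.IsAcyclic) {u v z : V} (huv : G.Adj u v) (hvz : G.Adj v z)
    (hzu : z ≠ u) : u ∉ compOf G v z := by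
  classical
  rintro ⟨q, hq⟩
  have hp1 : (Walk.cons huv (Walk.cons hvz Walk.nil)).IsPath := by
    simp [Walk.isPath_def, huv.ne, hvz.ne, hzu.symm]
  have hequ := hac.path_unique ⟨Walk.cons huv (Walk.cons hvz Walk.nil), hp1⟩ q.reverse.toPath
  have hv : v ∈ (q.reverse.toPath : G.Walk u z).support := by
    rw [← hequ]; simp
  have := q.reverse.support_toPath_subset hv
  rw [Walk.support_reverse, List.mem_reverse] at this
  exact hq this

lemma compOf_subset (hac : G.IsAcyclic) {u v z : V} (huv : G.Adj u v) (hvz : G.Adj v z)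
    (hzu : z ≠ u) : compOf G v z ⊆ compOf G u v := by
  have hu := not_mem_compOf_adj hac huv hvz hzu
  rintro y ⟨q, hq⟩
  have huq : u ∉ q.support := fun h => hu (mem_compOf_of_support q hq h)
  exact ⟨Walk.cons hvz q, by simp [huv.ne, huq]⟩

/-- Every component of `G \ v` is the component of a neighbor of `v`. -/
lemma exists_adj_compOf (hc : G.Connected) {v x : V} (hxv : x ≠ v) :
    ∃ z, G.Adj v z ∧ compOf G v x = compOf G v z := by
  classical
  obtain ⟨p⟩ := hc v x
  obtain ⟨q, hq⟩ := p.toPath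
  cases q with
  | nil => exact absurd rfl hxv
  | @cons _ z _ h r =>
    rw [Walk.cons_isPath_iff] at hq
    have hx : x ∈ compOf G v z := ⟨r, hq.2⟩
    exact ⟨z, h, (compOf_eq_of_mem hx).symm⟩

lemma mem_compOf_iff_adj {u v w y : V} (huv : G.Adj u v) (hwu : w ≠ u) (hwv : w ≠ v) :
    u ∈ compOf G w y ↔ v ∈ compOf G w y := by
  constructor
  · rintro ⟨p, hp⟩
    refine ⟨p.concat huv, ?_⟩
    rw [Walk.support_concat]
    simp [hp, hwv]
  · rintro ⟨p, hp⟩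
    refine ⟨p.concat huv.symm, ?_⟩
    rw [Walk.support_concat]
    simp [hp, hwu]

/-- In an acyclic graph, every walk between the endpoints of a path passes through every
vertex of the path. -/
lemma mem_support_of_isPath (hac : G.IsAcyclic) {u l w : V} (p : G.Walk u l) (hp : p.IsPath)
    (hw : w ∈ p.support) (q : G.Walk u l) : w ∈ q.support := by
  classical
  have hequ := hac.path_unique ⟨p, hp⟩ q.toPath
  have hmem : w ∈ (q.toPath : G.Walk u l).support := by rw [← hequ]; exact hw
  exact q.support_toPath_subset hmem

/-- Key inductive lemma: for an edge `u–v` of a tree, there is a leaf `l` in the component of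
`G \ u` containing `v` such that for every `w` in this component separating `u` from `l`,
the component of `G \ w` containing `l` is a smallest component of `G \ w` among those not
containing `u`. -/
lemma key {V : Type*} [Fintype V] {G : SimpleGraph V} (hT : G.IsTree) :
    ∀ n : ℕ, ∀ u v : V, G.Adj u v → (compOf G u v).ncard ≤ n →
    ∃ l, l ∈ compOf G u v ∧ IsLeaf G l ∧
      ∀ w ∈ compOf G u v, w ≠ l → u ∉ compOf G w l →
        ∀ x, x ≠ w → u ∉ compOf G w x →
          (compOf G w l).ncard ≤ (compOf G w x).ncard := by
  intro n
  induction n with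
  | zero =>
    intro u v huv hn
    exfalso
    have hv : v ∈ compOf G u v := mem_compOf_self huv.ne'
    have : 0 < (compOf G u v).ncard := (Set.ncard_pos (Set.toFinite _)).2 ⟨v, hv⟩
    omega
  | succ n ih =>
    intro u v huv hn
    classical
    by_cases hleaf : ∀ z, G.Adj v z → z = u
    · -- v is a leaf
      have hcomp : ∀ y ∈ compOf G u v, y = v := by
        rintro y ⟨q, hq⟩
        cases q with
        | nil => rfl
        | @cons _ z _ h r =>
          exfalso
          apply hq
          rw [Walk.support_cons]
          exact List.mem_cons_of_mem _ ((hleaf z h) ▸ r.start_mem_support)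
      refine ⟨v, mem_compOf_self huv.ne', ?_, ?_⟩
      · have hns : G.neighborSet v = {u} := by
          ext z
          simp only [mem_neighborSet, Set.mem_singleton_iff]
          exact ⟨fun hz => hleaf z hz, fun hz => hz ▸ huv.symm⟩
        rw [IsLeaf, hns, Set.ncard_singleton]
      · intro w hw hwv _ x _ _
        exact absurd (hcomp w hw) hwv
    · push_neg at hleaf
      obtain ⟨z0, hz0, hz0u⟩ := hleaf
      have hne : ((G.neighborFinset v).filter (fun z => z ≠ u)).Nonempty :=
        ⟨z0, Finset.mem_filter.2 ⟨(mem_neighborFinset G v z0).2 hz0, hz0u⟩⟩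
      obtain ⟨z, hzmem, hmin⟩ := Finset.exists_min_image _ (fun z => (compOf G v z).ncard) hne
      rw [Finset.mem_filter, mem_neighborFinset] at hzmem
      obtain ⟨hvz, hzu⟩ := hzmem
      have hnu : u ∉ compOf G v z := not_mem_compOf_adj hT.IsAcyclic huv hvz hzu
      have hsub : compOf G v z ⊆ compOf G u v := compOf_subset hT.IsAcyclic huv hvz hzu
      have hvmemC : v ∈ compOf G u v := mem_compOf_self huv.ne'
      have hssub : compOf G v z ⊂ compOf G u v :=
        Set.ssubset_iff_subset_ne.2 ⟨hsub, fun h => not_mem_compOf_self (h ▸ hvmemC)⟩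
      have hlt : (compOf G v z).ncard < (compOf G u v).ncard :=
        Set.ncard_lt_ncard hssub (Set.toFinite _)
      obtain ⟨l, hl, hleafl, hcond⟩ := ih v z hvz (by omega)
      refine ⟨l, hsub hl, hleafl, ?_⟩
      intro w hw hwl hul x hxw hux
      by_cases hwv : w = v
      · subst hwv
        rw [← compOf_eq_of_mem hl]
        obtain ⟨z', hz', heq⟩ := exists_adj_compOf hT.isConnected hxw
        rw [heq]
        have hz'x : z' ∈ compOf G w x := heq ▸ mem_compOf_self hz'.ne'
        have hz'u : z' ≠ u := fun h => hux (h ▸ hz'x)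
        exact hmin z' (Finset.mem_filter.2 ⟨(mem_neighborFinset G w z').2 hz', hz'u⟩)
      · have hwu : w ≠ u := fun h => not_mem_compOf_self (h ▸ hw)
        have hwz : w ∈ compOf G v z := by
          by_contra hwz
          apply hul
          obtain ⟨q, hq⟩ := hl
          have huq : u ∉ q.support := fun h => hnu (mem_compOf_of_support q hq h)
          have hwq : w ∉ q.support := fun h => hwz (mem_compOf_of_support q hq h)
          refine ⟨(Walk.cons huv (Walk.cons hvz q)).reverse, ?_⟩
          rw [Walk.support_reverse, List.mem_reverse]
          simp [hwu, hwv, hwq]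
        have hvl : v ∉ compOf G w l := fun h => hul ((mem_compOf_iff_adj huv hwu hwv).2 h)
        exact hcond w hwz hwl hvl x hxw
          (fun h => hux ((mem_compOf_iff_adj huv hwu hwv).2 h))

end Aux

/-- For every finite tree with at least two vertices and every vertex `u`, there is a
special leaf with respect to the tree and `u`. -/
theorem stmt_9 {V : Type*} [Fintype V] (G : SimpleGraph V)
    (hT : G.IsTree) (h2 : 2 ≤ Fintype.card V) (u : V) :
    ∃ l : V, IsSpecialLeaf G u l := by
  classical
  obtain ⟨y, hy⟩ := Fintype.exists_ne_of_one_lt_card (by omega) u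
  obtain ⟨p0⟩ := hT.isConnected u y
  have hne : (G.neighborFinset u).Nonempty := by
    cases p0 with
    | nil => exact absurd rfl hy
    | @cons _ z _ h r => exact ⟨z, (mem_neighborFinset G u z).2 h⟩
  obtain ⟨v, hvmem, hmin⟩ :=
    Finset.exists_min_image _ (fun z => (compOf G u z).ncard) hne
  have huv : G.Adj u v := (mem_neighborFinset G u v).1 hvmem
  obtain ⟨l, hl, hleaf, hcond⟩ := key hT ((compOf G u v).ncard) u v huv le_rfl
  refine ⟨l, fun h => not_mem_compOf_self (h ▸ hl), hleaf, ?_⟩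
  intro p hp w hwsup hwl x hxw hux
  by_cases hwu : w = u
  · subst hwu
    rw [(compOf_eq_of_mem hl).symm]
    obtain ⟨z', hz', heq⟩ := exists_adj_compOf hT.isConnected hxw
    rw [heq]
    exact hmin z' ((mem_neighborFinset G w z').2 hz')
  · have hul : u ∉ compOf G w l := by
      rintro ⟨q, hq⟩
      have hmem := mem_support_of_isPath hT.IsAcyclic p hp hwsup q.reverse
      rw [Walk.support_reverse, List.mem_reverse] at hmem
      exact hq hmem
    have hwC : w ∈ compOf G u v := by
      cases p with
      | nil =>
        rw [Walk.support_nil, List.mem_singleton] at hwsup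
        exact absurd hwsup hwu
      | @cons _ z _ h r =>
        rw [Walk.cons_isPath_iff] at hp
        have hwr : w ∈ r.support := by
          rw [Walk.support_cons] at hwsup
          rcases List.mem_cons.1 hwsup with h' | h'
          · exact absurd h' hwu
          · exact h'
        have h1 : w ∈ compOf G u z := mem_compOf_of_support r hp.2 hwr
        have h2 : l ∈ compOf G u z := ⟨r, hp.2⟩
        rw [compOf_eq_of_mem h2, ← compOf_eq_of_mem hl] at h1
        exact h1
    exact hcond w hwC hwl hul x hxw hux
end
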